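/- If T is a quasi-balanced finite full binary tree, then E_T ≤ 2·m_T, where m_T is the minimum length of a branch of T and E_T is the expected length of a random branch. -/

import Mathlib

/-- Finite full rooted ordered binary trees with internal nodes labeled by `X`. -/
inductive BTree (X : Type) : Type
  | leaf : BTree X
  | node : X → BTree X → BTree X → BTree X

namespace BTree

variable {X : Type}

/-- The branches (root-to-leaf paths) of a tree, each recorded as the list of
edge labels (`false` = left/0, `true` = right/1) along the path. -/
def branches : BTree X → List (List Bool)
  | leaf => [[]]
  | node _ l r => (branches l).map (List.cons false) ++ (branches r).map (List.cons true)

/-- The expected length of a uniformly random branch: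
`E T = ∑_{b ∈ B(T)} |b| · 2^{-|b|}`. -/
noncomputable def E (t : BTree X) : ℝ :=
  ((branches t).map (fun b => (b.length : ℝ) * (2 : ℝ) ^ (-(b.length : ℤ)))).sum

/-- The internal-node positions of the tree, as paths from the root. -/
def nodePaths : BTree X → List (List Bool)
  | leaf => []
  | node _ l r =>
      [] :: ((nodePaths l).map (List.cons false) ++ (nodePaths r).map (List.cons true))

/-- `w` is a weight function for `t`: at every internal node, the two outgoing
edges get nonnegative weights summing to `1`. -/
def IsWeightFn (t : BTree X) (w : List Bool → Bool → ℝ) : Prop :=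
  ∀ p ∈ nodePaths t, 0 ≤ w p false ∧ 0 ≤ w p true ∧ w p false + w p true = 1

/-- The total weight of a branch `b`: the sum of the weights of its edges. -/
def branchWeight (w : List Bool → Bool → ℝ) (b : List Bool) : ℝ :=
  ((List.range b.length).map (fun i => w (b.take i) (b.getD i false))).sum

/-- The subtree of `t` rooted at the end of the path `p` (junk value `leaf`
if the path leaves the tree). -/
def subtreeAt : BTree X → List Bool → BTree X
  | t, [] => t
  | leaf, _ :: _ => leaf
  | node _ l r, d :: p => subtreeAt (if d then r else l) p

/-- A tree is quasi-balanced if some weight function gives all branches the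
same total weight `E T / 2`. -/
def QuasiBalanced (t : BTree X) : Prop :=
  ∃ w : List Bool → Bool → ℝ, IsWeightFn t w ∧ ∀ b ∈ branches t, branchWeight w b = E t / 2

/-- A tree is monotone if every subtree's expected branch length is at least
that of each of its immediate subtrees. -/
def IsMonotone : BTree X → Prop
  | leaf => True
  | node x l r =>
      E l ≤ E (node x l r) ∧ E r ≤ E (node x l r) ∧ IsMonotone l ∧ IsMonotone r

/-- The minimum length of a branch of the tree. -/
def minBranch : BTree X → ℕ
  | leaf => 0
  | node _ l r => 1 + min (minBranch l) (minBranch r)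

/-- The sequence of labeled examples along the path `p`: at a node labeled `x`,
following the edge labeled `d` produces the example `(x, d)`. -/
def examplesAlong : BTree X → List Bool → List (X × Bool)
  | leaf, _ => []
  | node _ _ _, [] => []
  | node x l r, d :: p => (x, d) :: examplesAlong (if d then r else l) p

end BTree


namespace BTree

lemma exists_min_branch {X : Type} (t : BTree X) :
    ∃ b ∈ branches t, b.length = minBranch t := by
  induction t with
  | leaf => exact ⟨[], by simp [branches, minBranch]⟩
  | node x l r ihl ihr =>
    obtain ⟨bl, hbl, hll⟩ := ihl
    obtain ⟨br, hbr, hlr⟩ := ihr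
    rcases le_total (minBranch l) (minBranch r) with h | h
    · refine ⟨false :: bl, ?_, ?_⟩
      · simp [branches, hbl]
      · simp [minBranch, hll, min_eq_left h, Nat.add_comm]
    · refine ⟨true :: br, ?_, ?_⟩
      · simp [branches, hbr]
      · simp [minBranch, hlr, min_eq_right h, Nat.add_comm]

lemma take_mem_nodePaths {X : Type} (t : BTree X) :
    ∀ b ∈ branches t, ∀ i < b.length, b.take i ∈ nodePaths t := by
  induction t with
  | leaf => intro b hb i hi; simp [branches] at hb; subst hb; simp at hi
  | node x l r ihl ihr =>
    intro b hb i hi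
    simp [branches] at hb
    rcases hb with ⟨b', hb', rfl⟩ | ⟨b', hb', rfl⟩ <;>
    · cases i with
      | zero => simp [nodePaths]
      | succ j =>
        simp only [List.take_succ_cons]
        show _ ∈ BTree.nodePaths (BTree.node x l r)
        unfold BTree.nodePaths
        first
        | exact List.mem_cons_of_mem _ (List.mem_append_left _
            (List.mem_map_of_mem (ihl b' hb' j (by simpa using hi))))
        | exact List.mem_cons_of_mem _ (List.mem_append_right _
            (List.mem_map_of_mem (ihr b' hb' j (by simpa using hi))))

end BTree

/-- The expected branch length of a quasi-balanced tree is at most twice the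
minimum branch length. -/
theorem quasiBalanced_E_le_two_mul_minBranch {X : Type} (T : BTree X)
    (hqb : BTree.QuasiBalanced T) :
    BTree.E T ≤ 2 * (BTree.minBranch T : ℝ) := by
  obtain ⟨w, hw, hbw⟩ := hqb
  obtain ⟨b, hb, hlen⟩ := BTree.exists_min_branch T
  have hle : BTree.branchWeight w b ≤ (b.length : ℝ) := by
    have h1 : ∀ x ∈ (List.range b.length).map
        (fun i => w (b.take i) (b.getD i false)), x ≤ 1 := by
      intro x hx
      simp only [List.mem_map, List.mem_range] at hx
      obtain ⟨i, hi, rfl⟩ := hx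
      obtain ⟨h0, h1, hs⟩ := hw _ (BTree.take_mem_nodePaths T b hb i hi)
      cases b.getD i false <;> linarith
    calc ((List.range b.length).map
        (fun i => w (b.take i) (b.getD i false))).sum
        ≤ ((List.range b.length).map
        (fun i => w (b.take i) (b.getD i false))).length • (1:ℝ) :=
          List.sum_le_card_nsmul _ 1 h1
      _ = (b.length : ℝ) := by simp
  have := hbw b hb
  rw [this] at hle
  rw [hlen] at hle
  linarith
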